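/- Let H be a real inner product space, let F be a finite nonempty family of vectors in H each of norm 1, and let 0 < ε < 1. Suppose there exists g ∈ H with ‖g‖ = 1 such that ⟨g, f⟩ > ε for every f ∈ F. Then there exists g₀ in the convex hull of F such that ⟨g₀, f⟩ > ε² for every f ∈ F. -/

import Mathlib

open scoped RealInnerProductSpace

/-- **Covering Lemma.** If every unit vector in a finite nonempty family `F` has inner
product more than `ε` with some fixed unit vector `g`, then some convex combination `g₀`
of elements of `F` has inner product more than `ε²` with every element of `F`. -/
theorem covering_lemma {H : Type*} [NormedAddCommGroup H] [InnerProductSpace ℝ H]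
    (F : Finset H) (hF : F.Nonempty) (hFnorm : ∀ f ∈ F, ‖f‖ = 1)
    (ε : ℝ) (hε0 : 0 < ε) (hε1 : ε < 1)
    (g : H) (hg : ‖g‖ = 1) (hgF : ∀ f ∈ F, ε < ⟪g, f⟫) :
    ∃ g₀ ∈ convexHull ℝ (F : Set H), ∀ f ∈ F, ε ^ 2 < ⟪g₀, f⟫ := by
  set K : Set H := convexHull ℝ (F : Set H) with hK
  have hKconv : Convex ℝ K := convex_convexHull ℝ _
  have hKcpt : IsCompact K := (F.finite_toSet).isCompact_convexHull (𝕜 := ℝ)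
  have hKne : K.Nonempty := ⟨hF.choose, subset_convexHull ℝ _ hF.choose_spec⟩
  obtain ⟨g₀, hg₀K, hmin⟩ := hKcpt.exists_isMinOn hKne (continuous_norm.continuousOn)
  refine ⟨g₀, hg₀K, fun f hf => ?_⟩
  -- Every element of K has inner product > ε with g, hence norm > ε.
  have hinner : ∀ x ∈ K, ε < ⟪g, x⟫ := by
    intro x hx
    have : x ∈ {y : H | ε < ⟪g, y⟫} := by
      refine convexHull_min ?_ ?_ hx
      · intro y hy; exact hgF y hy
      · intro a ha b hb s t hs ht hst
        simp only [Set.mem_setOf_eq] at ha hb ⊢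
        rw [inner_add_right, real_inner_smul_right, real_inner_smul_right]
        rcases hs.lt_or_eq with hs' | hs'
        · nlinarith [mul_le_mul_of_nonneg_left hb.le ht, mul_lt_mul_of_pos_left ha hs']
        · have ht1 : t = 1 := by linarith
          nlinarith [mul_lt_mul_of_pos_left hb (by linarith : (0:ℝ) < t)]
    exact this
  have hεnorm : ε < ‖g₀‖ := by
    have h1 : ε < ⟪g, g₀⟫ := hinner g₀ hg₀K
    have h2 : ⟪g, g₀⟫ ≤ ‖g‖ * ‖g₀‖ := real_inner_le_norm g g₀
    rw [hg, one_mul] at h2; linarith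
  -- Minimality gives ⟪g₀, f⟫ ≥ ‖g₀‖².
  have hmin' : ‖(0 : H) - g₀‖ = ⨅ w : K, ‖(0 : H) - w‖ := by
    haveI : Nonempty K := hKne.to_subtype
    refine le_antisymm (le_ciInf fun w => ?_) (ciInf_le ⟨0, fun _ ⟨_, h⟩ => h ▸ norm_nonneg _⟩ (⟨g₀, hg₀K⟩ : K))
    simp only [zero_sub, norm_neg]
    exact hmin w.2
  have key := (norm_eq_iInf_iff_real_inner_le_zero hKconv hg₀K).mp hmin' f
    (subset_convexHull ℝ _ hf)
  rw [zero_sub, inner_sub_right, inner_neg_left, inner_neg_left,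
    real_inner_self_eq_norm_sq] at key
  nlinarith [key, hεnorm, hε0]
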